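/- Let g be a finite-dimensional real Lie algebra, n ⊆ g a nonzero nilpotent ideal with dim(g/n) = 1, and z the center of n (a nonzero ideal of g). If O ⊆ g* is a nonempty open subset such that O is contained in the closure of the coadjoint orbit Int(g)·ξ for every ξ ∈ O, then O ∩ z^⊥ = ∅; that is, every ξ ∈ O satisfies ξ|_z ≠ 0, where z^⊥ is the annihilator of z in g*. -/

import Mathlib

/-- The exponential of a linear endomorphism of a finite-dimensional real vector
space, computed via the matrix exponential in any basis. -/
noncomputable def expEnd {V : Type*} [AddCommGroup V] [Module ℝ V] [FiniteDimensional ℝ V]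
    (f : Module.End ℝ V) : Module.End ℝ V :=
  Matrix.toLin (Module.finBasis ℝ V) (Module.finBasis ℝ V)
    (NormedSpace.exp (LinearMap.toMatrix (Module.finBasis ℝ V) (Module.finBasis ℝ V) f))

/-- `Int(g)`: the subgroup of `GL(g)` generated by the exponentials `exp (ad x)`, `x ∈ g`. -/
noncomputable def intGroup (g : Type*) [LieRing g] [LieAlgebra ℝ g] [FiniteDimensional ℝ g] :
    Subgroup (g ≃ₗ[ℝ] g) :=
  Subgroup.closure {γ : g ≃ₗ[ℝ] g | ∃ x : g, γ.toLinearMap = expEnd (LieAlgebra.ad ℝ g x)}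

/-- The coadjoint orbit `Int(g)·ξ ⊆ g*`, where `γ·ξ := ξ ∘ γ⁻¹`. -/
noncomputable def coadOrbit {g : Type*} [LieRing g] [LieAlgebra ℝ g] [FiniteDimensional ℝ g]
    (ξ : Module.Dual ℝ g) : Set (Module.Dual ℝ g) :=
  {η | ∃ γ ∈ intGroup g, η = ξ ∘ₗ (γ⁻¹ : g ≃ₗ[ℝ] g).toLinearMap}

/-- If a submodule of a finite-dimensional real vector space is invariant under an
endomorphism `f`, then it is invariant under `expEnd f`. -/
lemma expEnd_mem_of_mapsTo {V : Type*} [AddCommGroup V] [Module ℝ V] [FiniteDimensional ℝ V]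
    (f : Module.End ℝ V) (p : Submodule ℝ V) (hf : ∀ v ∈ p, f v ∈ p)
    {v : V} (hv : v ∈ p) : expEnd f v ∈ p := by
  classical
  show (Matrix.toLin (Module.finBasis ℝ V) (Module.finBasis ℝ V)
      (NormedSpace.exp (LinearMap.toMatrix (Module.finBasis ℝ V) (Module.finBasis ℝ V) f))) v
      ∈ p
  set d := Module.finrank ℝ V with hd
  set b : Module.Basis (Fin d) ℝ V := Module.finBasis ℝ V with hb
  letI : SeminormedRing (Matrix (Fin d) (Fin d) ℝ) := Matrix.linftyOpSemiNormedRing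
  letI : NormedRing (Matrix (Fin d) (Fin d) ℝ) := Matrix.linftyOpNormedRing
  letI : NormedAlgebra ℝ (Matrix (Fin d) (Fin d) ℝ) := Matrix.linftyOpNormedAlgebra
  set M := LinearMap.toMatrix b b f with hM
  set q : Submodule ℝ (Fin d → ℝ) := p.map (b.equivFun : V →ₗ[ℝ] (Fin d → ℝ)) with hqdef
  have hq : ∀ w : V, w ∈ p ↔ b.equivFun w ∈ q := by
    intro w
    constructor
    · exact fun hw => ⟨w, hw, rfl⟩
    · rintro ⟨u, hu, huw⟩
      rwa [← b.equivFun.injective huw]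
  have hrepr : ∀ u : V, M.mulVec (b.equivFun u) = b.equivFun (f u) := by
    intro u
    simp only [Module.Basis.equivFun_apply, hM]
    exact LinearMap.toMatrix_mulVec_repr b b f u
  have hqM : ∀ N : Matrix (Fin d) (Fin d) ℝ, (∀ w ∈ q, N.mulVec w ∈ q) →
      ∀ w ∈ q, (M * N).mulVec w ∈ q := by
    intro N hN w hw
    rw [← Matrix.mulVec_mulVec]
    rcases hN w hw with ⟨u, hu, huw⟩
    have huw' : b.equivFun u = N.mulVec w := huw
    rw [← huw', hrepr u]
    exact (hq (f u)).mp (hf u hu)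
  have hSpow : ∀ k : ℕ, ∀ w ∈ q, (M ^ k).mulVec w ∈ q := by
    intro k
    induction k with
    | zero => intro w hw; simpa [Matrix.one_mulVec] using hw
    | succ k ih =>
      intro w hw
      rw [pow_succ']
      exact hqM _ ih w hw
  have hSsum : ∀ s : Finset ℕ,
      ∀ w ∈ q, (∑ k ∈ s, (k.factorial : ℝ)⁻¹ • M ^ k).mulVec w ∈ q := by
    intro s
    induction s using Finset.induction with
    | empty => intro w hw; simpa [Matrix.zero_mulVec] using q.zero_mem
    | insert _ _ hns ih =>
      intro w hw
      rw [Finset.sum_insert hns, Matrix.add_mulVec, Matrix.smul_mulVec]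
      exact q.add_mem (q.smul_mem _ (hSpow _ w hw)) (ih w hw)
  have hSclosed : IsClosed {N : Matrix (Fin d) (Fin d) ℝ | ∀ w ∈ q, N.mulVec w ∈ q} := by
    have heq : {N : Matrix (Fin d) (Fin d) ℝ | ∀ w ∈ q, N.mulVec w ∈ q} =
        ⋂ w : q, (fun N : Matrix (Fin d) (Fin d) ℝ => N.mulVec w) ⁻¹' (q : Set (Fin d → ℝ)) := by
      ext N
      simp only [Set.mem_iInter, Set.mem_preimage, Set.mem_setOf_eq, SetLike.mem_coe]
      exact ⟨fun h w => h w w.2, fun h w hw => h ⟨w, hw⟩⟩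
    rw [heq]
    refine isClosed_iInter fun w => IsClosed.preimage ?_ q.closed_of_finiteDimensional
    exact LinearMap.continuous_of_finiteDimensional
      (({ toFun := fun N : Matrix (Fin d) (Fin d) ℝ => N.mulVec w
          map_add' := fun A B => Matrix.add_mulVec A B w
          map_smul' := fun c A => by
            simpa using Matrix.smul_mulVec c A (w : Fin d → ℝ) } :
        Matrix (Fin d) (Fin d) ℝ →ₗ[ℝ] (Fin d → ℝ)))
  have hexp : ∀ w ∈ q, (NormedSpace.exp M).mulVec w ∈ q := by
    refine hSclosed.mem_of_tendsto
      (NormedSpace.exp_series_hasSum_exp' (𝕂 := ℝ) M).tendsto_sum_nat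
      (Filter.Eventually.of_forall fun m => ?_)
    exact hSsum (Finset.range m)
  have key := hexp (b.equivFun v) ((hq v).mp hv)
  rw [hq]
  have hkey : b.equivFun (Matrix.toLin b b (NormedSpace.exp M) v)
      = (NormedSpace.exp M).mulVec (b.equivFun v) := by
    simp only [Module.Basis.equivFun_apply]
    rw [← LinearMap.toMatrix_mulVec_repr b b (Matrix.toLin b b (NormedSpace.exp M)) v,
      LinearMap.toMatrix_toLin]
  rw [hkey]
  exact key

/-- If a linear automorphism of a finite-dimensional space maps a submodule into itself,
then so does its inverse. -/
lemma symm_mem_of_mapsTo {V : Type*} [AddCommGroup V] [Module ℝ V] [FiniteDimensional ℝ V]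
    (e : V ≃ₗ[ℝ] V) (p : Submodule ℝ V) (h : ∀ v ∈ p, e v ∈ p) {v : V} (hv : v ∈ p) :
    e.symm v ∈ p := by
  let f : p →ₗ[ℝ] p := e.toLinearMap.restrict h
  have hinj : Function.Injective f := by
    intro a b hab
    have h' : e a = e b := congrArg Subtype.val hab
    exact Subtype.ext (e.injective h')
  obtain ⟨w, hw⟩ := (LinearMap.injective_iff_surjective.mp hinj) ⟨v, hv⟩
  have hew : e w = v := congrArg Subtype.val hw
  rw [← hew, e.symm_apply_apply]
  exact w.2

/-- Every element of `Int(g)` preserves any `ad`-invariant submodule, in both directions. -/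
lemma intGroup_mapsTo {g : Type*} [LieRing g] [LieAlgebra ℝ g] [FiniteDimensional ℝ g]
    (z : Submodule ℝ g) (had : ∀ (x : g), ∀ v ∈ z, (LieAlgebra.ad ℝ g x) v ∈ z)
    {γ : g ≃ₗ[ℝ] g} (hγ : γ ∈ intGroup g) :
    (∀ v ∈ z, γ v ∈ z) ∧ (∀ v ∈ z, γ.symm v ∈ z) := by
  refine Subgroup.closure_induction ?_ ?_ ?_ ?_ hγ
  · rintro γ' ⟨x, hx⟩
    have hfwd : ∀ v ∈ z, γ' v ∈ z := by
      intro v hv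
      have : γ' v = expEnd (LieAlgebra.ad ℝ g x) v := LinearMap.congr_fun hx v
      rw [this]
      exact expEnd_mem_of_mapsTo _ z (had x) hv
    exact ⟨hfwd, fun v hv => symm_mem_of_mapsTo γ' z hfwd hv⟩
  · exact ⟨fun v hv => hv, fun v hv => hv⟩
  · intro a b _ _ ha hb
    exact ⟨fun v hv => ha.1 _ (hb.1 v hv), fun v hv => hb.2 _ (ha.2 v hv)⟩
  · intro a _ ha
    exact ⟨fun v hv => ha.2 v hv, fun v hv => ha.1 v hv⟩

/-- Let `n ⊆ g` be a nonzero nilpotent ideal with `dim (g/n) = 1` and `z` the center of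
`n`.  If `O ⊆ g*` is a nonempty open subset contained in the closure of the coadjoint
orbit `Int(g)·ξ` of each of its points `ξ`, then `O ∩ z^⊥ = ∅`, i.e. every `ξ ∈ O`
restricts to a nonzero functional on `z`.  (The dual `g*` carries its standard topology:
any Hausdorff vector topology, which is unique since `g*` is finite-dimensional.) -/
theorem statement9 {g : Type*} [LieRing g] [LieAlgebra ℝ g] [FiniteDimensional ℝ g]
    [TopologicalSpace (Module.Dual ℝ g)] [IsTopologicalAddGroup (Module.Dual ℝ g)]
    [ContinuousSMul ℝ (Module.Dual ℝ g)] [T2Space (Module.Dual ℝ g)]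
    (n : LieIdeal ℝ g) (hn : n ≠ ⊥) (hnilp : LieRing.IsNilpotent ↥n)
    (hcodim : Module.finrank ℝ (g ⧸ n.toSubmodule) = 1)
    (z : Submodule ℝ g) (hz : ∀ x : g, x ∈ z ↔ x ∈ n ∧ ∀ y ∈ n, ⁅x, y⁆ = 0)
    (O : Set (Module.Dual ℝ g)) (hne : O.Nonempty) (hO : IsOpen O)
    (horb : ∀ ξ ∈ O, O ⊆ closure (coadOrbit ξ)) :
    O ∩ ↑(Submodule.dualAnnihilator z) = ∅ := by
  -- `z` is invariant under every `ad x` (it is an ideal of `g`)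
  have had : ∀ (x : g), ∀ v ∈ z, (LieAlgebra.ad ℝ g x) v ∈ z := by
    intro x v hv
    rcases (hz v).mp hv with ⟨hvn, hvc⟩
    rw [LieAlgebra.ad_apply]
    refine (hz _).mpr ⟨n.lie_mem hvn, fun u hu => ?_⟩
    rw [lie_lie, hvc u hu, hvc _ (n.lie_mem hu), lie_zero, sub_zero]
  -- a nonzero central element of `n`
  obtain ⟨c, hc0, hcn, hcz⟩ : ∃ c : g, c ≠ 0 ∧ c ∈ n ∧ ∀ y ∈ n, ⁅c, y⁆ = 0 := by
    haveI : Nontrivial n := (LieSubmodule.nontrivial_iff_ne_bot ℝ g g).mpr hn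
    haveI := hnilp
    haveI := LieModule.nontrivial_max_triv_of_isNilpotent ℝ (↥n) (↥n)
    obtain ⟨m, hm0⟩ := exists_ne (0 : LieModule.maxTrivSubmodule ℝ (↥n) (↥n))
    refine ⟨((m : n) : g), ?_, (m : n).2, fun y hy => ?_⟩
    · intro h
      apply hm0
      have h1 : (m : n) = 0 := by exact_mod_cast h
      exact_mod_cast h1
    · have h := (LieModule.mem_maxTrivSubmodule ℝ (↥n) (↥n) (m : n)).mp m.2 ⟨y, hy⟩
      have h' : (((⁅(⟨y, hy⟩ : n), (m : n)⁆ : n)) : g) = 0 := by rw [h]; rfl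
      have h'' : ⁅y, ((m : n) : g)⁆ = 0 := h'
      rw [← lie_skew, h'', neg_zero]
  have hczmem : c ∈ z := (hz c).mpr ⟨hcn, hcz⟩
  -- suppose a point of `O` annihilates `z`
  rw [Set.eq_empty_iff_forall_notMem]
  rintro ξ ⟨hξO, hξann⟩
  have hξann' : ξ ∈ Submodule.dualAnnihilator z := hξann
  -- the coadjoint orbit of `ξ` lies in `z^⊥`
  have horbsub : coadOrbit ξ ⊆ (Submodule.dualAnnihilator z : Set (Module.Dual ℝ g)) := by
    rintro η ⟨γ, hγ, rfl⟩
    rw [SetLike.mem_coe, Submodule.mem_dualAnnihilator]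
    intro w hw
    have hmem : γ.symm w ∈ z := (intGroup_mapsTo z had hγ).2 w hw
    exact (Submodule.mem_dualAnnihilator ξ).mp hξann' _ hmem
  -- hence so does its closure, and hence `O`
  have hclosed : IsClosed (Submodule.dualAnnihilator z : Set (Module.Dual ℝ g)) :=
    (Submodule.dualAnnihilator z).closed_of_finiteDimensional
  have hOsub : O ⊆ (Submodule.dualAnnihilator z : Set (Module.Dual ℝ g)) :=
    (horb ξ hξO).trans (closure_minimal horbsub hclosed)
  -- so `z^⊥` has nonempty interior, hence is everything
  have htop : Submodule.dualAnnihilator z = ⊤ := by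
    refine Submodule.eq_top_of_nonempty_interior' _ ?_
    obtain ⟨η, hη⟩ := hne
    exact ⟨η, interior_maximal hOsub hO hη⟩
  -- but then every functional kills the nonzero element `c`, contradiction
  have : ∀ φ : Module.Dual ℝ g, φ c = 0 := by
    intro φ
    have hφ : φ ∈ Submodule.dualAnnihilator z := htop ▸ Submodule.mem_top
    exact (Submodule.mem_dualAnnihilator φ).mp hφ c hczmem
  exact hc0 ((Module.forall_dual_apply_eq_zero_iff ℝ c).mp this)
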